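/- For the trilinear form t_n(q1,q2,q3) = ⟨J_n(q1,q2), q3⟩ on ternary forms of degree n over ℤ, and any permutation σ of {1,2,3}, one has t_n(q_{σ(1)}, q_{σ(2)}, q_{σ(3)}) = (sign σ)^n · t_n(q1,q2,q3). -/

import Mathlib

noncomputable section
open MvPolynomial

/-- Polynomials in the six variables `x, y, z, u, v, w` (indexed `0,…,5`). -/
abbrev Poly6 (A : Type*) [CommRing A] := MvPolynomial (Fin 6) A

variable {A : Type*} [CommRing A]

/-- The operator `v∂z − w∂y` substituted for `x`. -/
def D1 (p : Poly6 A) : Poly6 A := X 4 * pderiv 2 p - X 5 * pderiv 1 p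

/-- The operator `w∂x − u∂z` substituted for `y`. -/
def D2 (p : Poly6 A) : Poly6 A := X 5 * pderiv 0 p - X 3 * pderiv 2 p

/-- The operator `u∂y − v∂x` substituted for `z`. -/
def D3 (p : Poly6 A) : Poly6 A := X 3 * pderiv 1 p - X 4 * pderiv 0 p

/-- The bilinear map `J_n`: substitute the operators `D1, D2, D3` into the first
argument and apply the resulting differential operator to the second argument. -/
def Jn (q1 q2 : Poly6 A) : Poly6 A :=
  ∑ m ∈ q1.support, MvPolynomial.C (q1.coeff m) *
    (D1^[m 0] (D2^[m 1] (D3^[m 2] q2)))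

/-- The polar pairing `⟨p, q⟩ = p(∂x, ∂y, ∂z) q`, where `p` is a form in the dual
variables `u, v, w` and `q` a form (of the same degree) in `x, y, z`; the result is
a constant, recorded via its constant coefficient. -/
def polarPair (p q : Poly6 A) : A :=
  constantCoeff (∑ m ∈ p.support, MvPolynomial.C (p.coeff m) *
    ((fun r => pderiv 0 r)^[m 3] ((fun r => pderiv 1 r)^[m 4] ((fun r => pderiv 2 r)^[m 5] q))))

/-- The trilinear form `t_n(q1, q2, q3) = ⟨J_n(q1, q2), q3⟩`. -/
def tn (q1 q2 q3 : Poly6 A) : A := polarPair (Jn q1 q2) q3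

/-- The harmonic contravariant `h_n(q) = J_n(q, q)`. -/
def hn (q : Poly6 A) : Poly6 A := Jn q q

/-- A polynomial involves only the variables `x, y, z` (indices `0, 1, 2`). -/
def OnlyXYZ (q : Poly6 A) : Prop := ∀ m ∈ q.support, m 3 = 0 ∧ m 4 = 0 ∧ m 5 = 0

end

noncomputable section Aux
open MvPolynomial Finset

abbrev P6 := Poly6 ℤ

def mop (s t : Fin 6) : Module.End ℤ P6 :=
  (LinearMap.mulLeft ℤ (X s : P6)).comp (pderiv t).toLinearMap

lemma mop_apply (s t : Fin 6) (p : P6) : mop s t p = X s * pderiv t p := rfl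

lemma pderiv_comm' (t t' : Fin 6) (p : P6) :
    pderiv t (pderiv t' p) = pderiv t' (pderiv t p) := by
  induction p using MvPolynomial.induction_on' with
  | monomial m a =>
    simp only [pderiv_monomial]
    by_cases h : t = t'
    · subst h; rfl
    · have hidx : (m - Finsupp.single t' 1) - Finsupp.single t 1
          = (m - Finsupp.single t 1) - Finsupp.single t' 1 := by
        ext l
        simp only [Finsupp.tsub_apply, Finsupp.single_apply]
        split <;> split <;> omega
      have hc1 : (((m - Finsupp.single t' 1 : Fin 6 →₀ ℕ) t : ℕ) : ℤ) = m t := by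
        rw [Finsupp.tsub_apply, Finsupp.single_apply, if_neg (Ne.symm h), Nat.sub_zero]
      have hc2 : (((m - Finsupp.single t 1 : Fin 6 →₀ ℕ) t' : ℕ) : ℤ) = m t' := by
        rw [Finsupp.tsub_apply, Finsupp.single_apply, if_neg h, Nat.sub_zero]
      rw [hidx, hc1, hc2, mul_right_comm]
  | add p q hp hq => simp [hp, hq]

lemma mop_commute {s t s' t' : Fin 6} (h1 : t ≠ s') (h2 : t' ≠ s) :
    Commute (mop s t) (mop s' t') := by
  apply LinearMap.ext
  intro p
  simp only [Module.End.mul_apply, mop_apply]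
  rw [pderiv_mul, pderiv_mul, pderiv_X, pderiv_X]
  simp only [Pi.single_eq_of_ne (Ne.symm h1), Pi.single_eq_of_ne (Ne.symm h2), map_zero, C_0,
    zero_mul, add_zero, mul_zero, zero_add, pderiv_comm' t t' p]
  ring

lemma X_mul_monomial' (s : Fin 6) (m : Fin 6 →₀ ℕ) (a : ℤ) :
    (X s : P6) * monomial m a = monomial (m + Finsupp.single s 1) a := by
  rw [X, monomial_mul, one_mul, add_comm]

lemma mop_pow_monomial (s t : Fin 6) (hst : s ≠ t) (k : ℕ) (m : Fin 6 →₀ ℕ) (a : ℤ) :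
    (mop s t ^ k) (monomial m a)
      = monomial (m + k • Finsupp.single s 1 - k • Finsupp.single t 1)
          (a * (m t).descFactorial k) := by
  induction k with
  | zero => simp
  | succ k ih =>
    rw [pow_succ', Module.End.mul_apply, ih, mop_apply, pderiv_monomial, X_mul_monomial']
    have hread : ((m + k • Finsupp.single s 1 - k • Finsupp.single t 1 : Fin 6 →₀ ℕ) t : ℕ)
        = m t - k := by
      simp only [Finsupp.tsub_apply, Finsupp.coe_add, Pi.add_apply, Finsupp.smul_apply,
        Finsupp.single_apply, smul_eq_mul]
      split_ifs <;> simp_all <;> omega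
    have hidx : (m + k • Finsupp.single s 1 - k • Finsupp.single t 1 : Fin 6 →₀ ℕ)
          - Finsupp.single t 1 + Finsupp.single s 1
        = m + (k + 1) • Finsupp.single s 1 - (k + 1) • Finsupp.single t 1 := by
      ext l
      simp only [Finsupp.coe_add, Pi.add_apply, Finsupp.tsub_apply, Finsupp.smul_apply,
        Finsupp.single_apply, smul_eq_mul]
      split_ifs with h1 h2 <;> first
        | omega
        | (exfalso; exact hst (h1.trans h2.symm))
    rw [hidx, hread, Nat.descFactorial_succ]
    push_cast
    ring

lemma pderiv_iter_monomial (t : Fin 6) (k : ℕ) (m : Fin 6 →₀ ℕ) (a : ℤ) :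
    (fun r : P6 => pderiv t r)^[k] (monomial m a)
      = monomial (m - k • Finsupp.single t 1) (a * (m t).descFactorial k) := by
  induction k with
  | zero => simp
  | succ k ih =>
    rw [Function.iterate_succ_apply', ih, pderiv_monomial]
    have hread : ((m - k • Finsupp.single t 1 : Fin 6 →₀ ℕ) t : ℕ) = m t - k := by
      simp [Finsupp.tsub_apply]
    have hidx : (m - k • Finsupp.single t 1 : Fin 6 →₀ ℕ) - Finsupp.single t 1
        = m - (k + 1) • Finsupp.single t 1 := by
      ext l
      simp only [Finsupp.tsub_apply, Finsupp.smul_apply, Finsupp.single_apply, smul_eq_mul]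
      split_ifs <;> omega
    rw [hidx, hread, Nat.descFactorial_succ]
    push_cast
    ring

lemma descFactorial_comp (n p q : ℕ) :
    (n.descFactorial p) * ((n - p).descFactorial q) = n.descFactorial (p + q) := by
  have := Nat.descFactorial_mul_descFactorial (k := p) (m := p + q) (n := n) (Nat.le_add_right p q)
  simp only [Nat.add_sub_cancel_left] at this
  rw [← this, mul_comm]

/-- binomial expansion for the difference of two commuting endomorphisms, applied to a vector -/
lemma sub_pow_apply (Ea Eb : Module.End ℤ P6) (h : Commute Ea Eb) (c : ℕ) (p : P6) :
    ((Ea - Eb) ^ c) p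
      = ∑ k ∈ Finset.range (c + 1),
          ((-1 : ℤ) ^ (c - k) * (c.choose k : ℤ)) • ((Ea ^ k) ((Eb ^ (c - k)) p)) := by
  have h2 : Commute Ea (-Eb) := h.neg_right
  rw [sub_eq_add_neg, h2.add_pow, LinearMap.sum_apply]
  refine Finset.sum_congr rfl fun k hk => ?_
  have hneg : (-Eb) = (-1 : ℤ) • Eb := by simp
  rw [hneg, smul_pow, mul_smul_comm, smul_mul_assoc, LinearMap.smul_apply]
  rw [Module.End.mul_apply, Module.End.mul_apply, Module.End.natCast_apply]
  rw [map_nsmul, map_nsmul, ← Nat.cast_smul_eq_nsmul ℤ, smul_smul]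

def mxyz (a b c : ℕ) : Fin 6 →₀ ℕ :=
  Finsupp.single 0 a + Finsupp.single 1 b + Finsupp.single 2 c

def eIdx (m2 : Fin 6 →₀ ℕ) (e3 e4 e5 d0 d1 d2 : ℕ) : Fin 6 →₀ ℕ :=
  m2 + (e3 • Finsupp.single 3 1 + e4 • Finsupp.single 4 1 + e5 • Finsupp.single 5 1)
     - (d0 • Finsupp.single 0 1 + d1 • Finsupp.single 1 1 + d2 • Finsupp.single 2 1)

lemma fin6_apply_simp (m2 : Fin 6 →₀ ℕ) (e3 e4 e5 d0 d1 d2 : ℕ) :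
    (eIdx m2 e3 e4 e5 d0 d1 d2) 0 = m2 0 - d0 ∧ (eIdx m2 e3 e4 e5 d0 d1 d2) 1 = m2 1 - d1 ∧
    (eIdx m2 e3 e4 e5 d0 d1 d2) 2 = m2 2 - d2 ∧ (eIdx m2 e3 e4 e5 d0 d1 d2) 3 = m2 3 + e3 ∧
    (eIdx m2 e3 e4 e5 d0 d1 d2) 4 = m2 4 + e4 ∧ (eIdx m2 e3 e4 e5 d0 d1 d2) 5 = m2 5 + e5 := by
  refine ⟨?_, ?_, ?_, ?_, ?_, ?_⟩ <;>
    simp [eIdx, Finsupp.tsub_apply, Finsupp.single_apply] <;> omega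

lemma mxyz_apply (a b c : ℕ) :
    (mxyz a b c) 0 = a ∧ (mxyz a b c) 1 = b ∧ (mxyz a b c) 2 = c := by
  refine ⟨?_, ?_, ?_⟩ <;> simp [mxyz, Finsupp.single_apply]

lemma D3_iter (k : ℕ) (p : P6) : D3^[k] p = ((mop 3 1 - mop 4 0) ^ k) p := by
  have h : (D3 : P6 → P6) = ⇑(mop 3 1 - mop 4 0) := by
    funext r; simp [D3, mop_apply, LinearMap.sub_apply]
  rw [h, ← Module.End.pow_apply]

lemma D2_iter (k : ℕ) (p : P6) : D2^[k] p = ((mop 5 0 - mop 3 2) ^ k) p := by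
  have h : (D2 : P6 → P6) = ⇑(mop 5 0 - mop 3 2) := by
    funext r; simp [D2, mop_apply, LinearMap.sub_apply]
  rw [h, ← Module.End.pow_apply]

lemma D1_iter (k : ℕ) (p : P6) : D1^[k] p = ((mop 4 2 - mop 5 1) ^ k) p := by
  have h : (D1 : P6 → P6) = ⇑(mop 4 2 - mop 5 1) := by
    funext r; simp [D1, mop_apply, LinearMap.sub_apply]
  rw [h, ← Module.End.pow_apply]

lemma step3 (c : ℕ) (m2 : Fin 6 →₀ ℕ) (A2 : ℤ) :
    ((mop 3 1 - mop 4 0) ^ c) (monomial m2 A2) =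
      ∑ k ∈ Finset.range (c+1),
        monomial (eIdx m2 k (c-k) 0 (c-k) k 0)
          (A2 * ((-1)^(c-k) * c.choose k) * (m2 0).descFactorial (c-k)
            * (m2 1).descFactorial k) := by
  rw [sub_pow_apply _ _ (mop_commute (by decide) (by decide)) c]
  refine Finset.sum_congr rfl fun k hk => ?_
  rw [mop_pow_monomial 4 0 (by decide), mop_pow_monomial 3 1 (by decide)]
  have hread : ((m2 + (c-k) • Finsupp.single 4 1 - (c-k) • Finsupp.single 0 1 : Fin 6 →₀ ℕ) 1)
      = m2 1 := by
    simp [Finsupp.tsub_apply, Finsupp.single_apply]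
  have hidx : (m2 + (c-k) • Finsupp.single 4 1 - (c-k) • Finsupp.single 0 1 : Fin 6 →₀ ℕ)
      + k • Finsupp.single 3 1 - k • Finsupp.single 1 1 = eIdx m2 k (c-k) 0 (c-k) k 0 := by
    ext l
    fin_cases l <;>
      simp (config := { decide := true }) [eIdx, Finsupp.tsub_apply, Finsupp.single_apply,
        Fin.ext_iff] <;> omega
  rw [hread, hidx, smul_monomial, smul_eq_mul]
  congr 1
  push_cast
  ring

lemma step2 (b : ℕ) (m2 : Fin 6 →₀ ℕ) (e3 e4 e5 d0 d1 d2 : ℕ) (A : ℤ) :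
    ((mop 5 0 - mop 3 2) ^ b) (monomial (eIdx m2 e3 e4 e5 d0 d1 d2) A) =
      ∑ j ∈ Finset.range (b+1),
        monomial (eIdx m2 (e3+(b-j)) e4 (e5+j) (d0+j) d1 (d2+(b-j)))
          (A * ((-1)^(b-j) * b.choose j) * (m2 2 - d2).descFactorial (b-j)
            * (m2 0 - d0).descFactorial j) := by
  rw [sub_pow_apply _ _ (mop_commute (by decide) (by decide)) b]
  refine Finset.sum_congr rfl fun j hj => ?_
  rw [mop_pow_monomial 3 2 (by decide), mop_pow_monomial 5 0 (by decide)]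
  have hread1 : ((eIdx m2 e3 e4 e5 d0 d1 d2) 2) = m2 2 - d2 := by
    simp (config := { decide := true }) [eIdx, Finsupp.tsub_apply, Finsupp.single_apply,
      Fin.ext_iff]
  have hread2 : ((eIdx m2 e3 e4 e5 d0 d1 d2 + (b-j) • Finsupp.single 3 1
      - (b-j) • Finsupp.single 2 1 : Fin 6 →₀ ℕ) 0) = m2 0 - d0 := by
    simp (config := { decide := true }) [eIdx, Finsupp.tsub_apply, Finsupp.single_apply,
      Fin.ext_iff]
  have hidx : (eIdx m2 e3 e4 e5 d0 d1 d2 + (b-j) • Finsupp.single 3 1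
        - (b-j) • Finsupp.single 2 1 : Fin 6 →₀ ℕ) + j • Finsupp.single 5 1
        - j • Finsupp.single 0 1
      = eIdx m2 (e3+(b-j)) e4 (e5+j) (d0+j) d1 (d2+(b-j)) := by
    ext l
    fin_cases l <;>
      simp (config := { decide := true }) [eIdx, Finsupp.tsub_apply, Finsupp.single_apply,
        Fin.ext_iff] <;> omega
  rw [hread1, hread2, hidx, smul_monomial, smul_eq_mul]
  congr 1
  push_cast
  ring

lemma step1 (a : ℕ) (m2 : Fin 6 →₀ ℕ) (e3 e4 e5 d0 d1 d2 : ℕ) (A : ℤ) :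
    ((mop 4 2 - mop 5 1) ^ a) (monomial (eIdx m2 e3 e4 e5 d0 d1 d2) A) =
      ∑ i ∈ Finset.range (a+1),
        monomial (eIdx m2 e3 (e4+i) (e5+(a-i)) d0 (d1+(a-i)) (d2+i))
          (A * ((-1)^(a-i) * a.choose i) * (m2 1 - d1).descFactorial (a-i)
            * (m2 2 - d2).descFactorial i) := by
  rw [sub_pow_apply _ _ (mop_commute (by decide) (by decide)) a]
  refine Finset.sum_congr rfl fun i hi => ?_
  rw [mop_pow_monomial 5 1 (by decide), mop_pow_monomial 4 2 (by decide)]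
  have hread1 : ((eIdx m2 e3 e4 e5 d0 d1 d2) 1) = m2 1 - d1 := by
    simp (config := { decide := true }) [eIdx, Finsupp.tsub_apply, Finsupp.single_apply,
      Fin.ext_iff]
  have hread2 : ((eIdx m2 e3 e4 e5 d0 d1 d2 + (a-i) • Finsupp.single 5 1
      - (a-i) • Finsupp.single 1 1 : Fin 6 →₀ ℕ) 2) = m2 2 - d2 := by
    simp (config := { decide := true }) [eIdx, Finsupp.tsub_apply, Finsupp.single_apply,
      Fin.ext_iff]
  have hidx : (eIdx m2 e3 e4 e5 d0 d1 d2 + (a-i) • Finsupp.single 5 1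
        - (a-i) • Finsupp.single 1 1 : Fin 6 →₀ ℕ) + i • Finsupp.single 4 1
        - i • Finsupp.single 2 1
      = eIdx m2 e3 (e4+i) (e5+(a-i)) d0 (d1+(a-i)) (d2+i) := by
    ext l
    fin_cases l <;>
      simp (config := { decide := true }) [eIdx, Finsupp.tsub_apply, Finsupp.single_apply,
        Fin.ext_iff] <;> omega
  rw [hread1, hread2, hidx, smul_monomial, smul_eq_mul]
  congr 1
  push_cast
  ring

lemma Jn_monomial (a b c : ℕ) (A1 : ℤ) (m2 : Fin 6 →₀ ℕ) (A2 : ℤ) :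
    Jn (monomial (mxyz a b c) A1) (monomial m2 A2) =
      ∑ k ∈ Finset.range (c+1), ∑ j ∈ Finset.range (b+1), ∑ i ∈ Finset.range (a+1),
        monomial (eIdx m2 (k+(b-j)) ((c-k)+i) (j+(a-i)) ((c-k)+j) (k+(a-i)) ((b-j)+i))
          (A1 * A2 * ((-1)^(c-k) * c.choose k) * ((-1)^(b-j) * b.choose j)
            * ((-1)^(a-i) * a.choose i)
            * (m2 0).descFactorial ((c-k)+j) * (m2 1).descFactorial (k+(a-i))
            * (m2 2).descFactorial ((b-j)+i)) := by
  by_cases hA1 : A1 = 0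
  · subst hA1
    simp [Jn, support_monomial]
  · unfold Jn
    rw [support_monomial, if_neg hA1, Finset.sum_singleton]
    have h0 : (mxyz a b c) 0 = a := (mxyz_apply a b c).1
    have h1 : (mxyz a b c) 1 = b := (mxyz_apply a b c).2.1
    have h2 : (mxyz a b c) 2 = c := (mxyz_apply a b c).2.2
    rw [h0, h1, h2, coeff_monomial, if_pos rfl]
    rw [D3_iter, step3]
    have hD2 : D2^[b] (∑ k ∈ Finset.range (c+1),
        monomial (eIdx m2 k (c-k) 0 (c-k) k 0)
          (A2 * ((-1)^(c-k) * c.choose k) * (m2 0).descFactorial (c-k)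
            * (m2 1).descFactorial k)) =
        ∑ k ∈ Finset.range (c+1), ((mop 5 0 - mop 3 2) ^ b)
          (monomial (eIdx m2 k (c-k) 0 (c-k) k 0)
          (A2 * ((-1)^(c-k) * c.choose k) * (m2 0).descFactorial (c-k)
            * (m2 1).descFactorial k)) := by
      rw [D2_iter, map_sum]
    rw [hD2]
    have hD2' : ∀ k ∈ Finset.range (c+1), ((mop 5 0 - mop 3 2) ^ b)
          (monomial (eIdx m2 k (c-k) 0 (c-k) k 0)
          (A2 * ((-1)^(c-k) * c.choose k) * (m2 0).descFactorial (c-k)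
            * (m2 1).descFactorial k)) =
        ∑ j ∈ Finset.range (b+1),
          monomial (eIdx m2 (k+(b-j)) (c-k) j ((c-k)+j) k (b-j))
            (A2 * ((-1)^(c-k) * c.choose k) * (m2 0).descFactorial (c-k)
              * (m2 1).descFactorial k * ((-1)^(b-j) * b.choose j)
              * (m2 2).descFactorial (b-j) * (m2 0 - (c-k)).descFactorial j) := by
      intro k hk
      rw [step2]
      refine Finset.sum_congr rfl fun j hj => ?_
      congr 1
      simp
    rw [Finset.sum_congr rfl hD2']
    have hD1 : D1^[a] (∑ k ∈ Finset.range (c+1), ∑ j ∈ Finset.range (b+1),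
        monomial (eIdx m2 (k+(b-j)) (c-k) j ((c-k)+j) k (b-j))
            (A2 * ((-1)^(c-k) * c.choose k) * (m2 0).descFactorial (c-k)
              * (m2 1).descFactorial k * ((-1)^(b-j) * b.choose j)
              * (m2 2).descFactorial (b-j) * (m2 0 - (c-k)).descFactorial j)) =
        ∑ k ∈ Finset.range (c+1), ∑ j ∈ Finset.range (b+1), ∑ i ∈ Finset.range (a+1),
          monomial (eIdx m2 (k+(b-j)) ((c-k)+i) (j+(a-i)) ((c-k)+j) (k+(a-i)) ((b-j)+i))
            ((A2 * ((-1)^(c-k) * c.choose k) * (m2 0).descFactorial (c-k)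
              * (m2 1).descFactorial k * ((-1)^(b-j) * b.choose j)
              * (m2 2).descFactorial (b-j) * (m2 0 - (c-k)).descFactorial j)
              * ((-1)^(a-i) * a.choose i) * (m2 1 - k).descFactorial (a-i)
              * (m2 2 - (b-j)).descFactorial i) := by
      rw [D1_iter, map_sum]
      refine Finset.sum_congr rfl fun k hk => ?_
      rw [map_sum]
      refine Finset.sum_congr rfl fun j hj => ?_
      rw [step1]
    rw [hD1, Finset.mul_sum]
    refine Finset.sum_congr rfl fun k hk => ?_
    rw [Finset.mul_sum]
    refine Finset.sum_congr rfl fun j hj => ?_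
    rw [Finset.mul_sum]
    refine Finset.sum_congr rfl fun i hi => ?_
    rw [C_mul_monomial]
    congr 1
    have hc1 : (((m2 1).descFactorial (k+(a-i)) : ℕ) : ℤ)
        = ((m2 1).descFactorial k : ℕ) * (((m2 1 - k).descFactorial (a-i) : ℕ) : ℤ) := by
      rw [← descFactorial_comp]
      push_cast
      ring
    have hc2 : (((m2 2).descFactorial ((b-j)+i) : ℕ) : ℤ)
        = ((m2 2).descFactorial (b-j) : ℕ) * (((m2 2 - (b-j)).descFactorial i : ℕ) : ℤ) := by
      rw [← descFactorial_comp]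
      push_cast
      ring
    have hc0 : (((m2 0).descFactorial ((c-k)+j) : ℕ) : ℤ)
        = ((m2 0).descFactorial (c-k) : ℕ) * (((m2 0 - (c-k)).descFactorial j : ℕ) : ℤ) := by
      rw [← descFactorial_comp]
      push_cast
      ring
    rw [hc0, hc1, hc2]
    ring
lemma polarPair_monomial (M : Fin 6 →₀ ℕ) (A : ℤ) (a b c : ℕ) (A3 : ℤ) :
    polarPair (monomial M A) (monomial (mxyz a b c) A3) =
      A * A3 * (if M 3 = a ∧ M 4 = b ∧ M 5 = c
        then ((a.factorial * b.factorial * c.factorial : ℕ) : ℤ) else 0) := by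
  by_cases hA : A = 0
  · subst hA
    simp [polarPair, support_monomial]
  · unfold polarPair
    rw [support_monomial, if_neg hA, Finset.sum_singleton, coeff_monomial, if_pos rfl]
    rw [pderiv_iter_monomial]
    have r2 : (mxyz a b c) 2 = c := (mxyz_apply a b c).2.2
    rw [r2, pderiv_iter_monomial]
    have r1 : ((mxyz a b c - M 5 • Finsupp.single 2 1 : Fin 6 →₀ ℕ) 1) = b := by
      simp (config := { decide := true }) [mxyz, Finsupp.tsub_apply, Finsupp.single_apply,
        Fin.ext_iff]
    rw [r1, pderiv_iter_monomial]
    have r0 : ((mxyz a b c - M 5 • Finsupp.single 2 1 - M 4 • Finsupp.single 1 1 :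
        Fin 6 →₀ ℕ) 0) = a := by
      simp (config := { decide := true }) [mxyz, Finsupp.tsub_apply, Finsupp.single_apply,
        Fin.ext_iff]
    rw [r0, map_mul, constantCoeff_C, constantCoeff_monomial]
    by_cases h : M 3 = a ∧ M 4 = b ∧ M 5 = c
    · obtain ⟨h3, h4, h5⟩ := h
      subst h3; subst h4; subst h5
      have hz : ((mxyz (M 3) (M 4) (M 5) - M 5 • Finsupp.single 2 1 - M 4 • Finsupp.single 1 1
          - M 3 • Finsupp.single 0 1 : Fin 6 →₀ ℕ)) = 0 := by
        ext l
        fin_cases l <;>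
          simp (config := { decide := true }) [mxyz, Finsupp.tsub_apply, Finsupp.single_apply,
            Fin.ext_iff]
      rw [if_pos hz, if_pos ⟨rfl, rfl, rfl⟩, Nat.descFactorial_self, Nat.descFactorial_self,
        Nat.descFactorial_self]
      push_cast
      ring
    · rw [if_neg h, mul_zero]
      by_cases hz : ((mxyz a b c - M 5 • Finsupp.single 2 1 - M 4 • Finsupp.single 1 1
          - M 3 • Finsupp.single 0 1 : Fin 6 →₀ ℕ)) = 0
      · have e0 : a - M 3 = 0 := by
          have := Finsupp.ext_iff.mp hz 0
          simpa (config := { decide := true }) [mxyz, Finsupp.tsub_apply, Finsupp.single_apply,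
            Fin.ext_iff] using this
        have e1 : b - M 4 = 0 := by
          have := Finsupp.ext_iff.mp hz 1
          simpa (config := { decide := true }) [mxyz, Finsupp.tsub_apply, Finsupp.single_apply,
            Fin.ext_iff] using this
        have e2 : c - M 5 = 0 := by
          have := Finsupp.ext_iff.mp hz 2
          simpa (config := { decide := true }) [mxyz, Finsupp.tsub_apply, Finsupp.single_apply,
            Fin.ext_iff] using this
        have hlt : a < M 3 ∨ b < M 4 ∨ c < M 5 := by
          rcases Decidable.not_and_iff_or_not.mp h with h' | h'
          · left; omega
          · rcases Decidable.not_and_iff_or_not.mp h' with h'' | h''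
            · right; left; omega
            · right; right; omega
        rw [if_pos hz]
        rcases hlt with hlt | hlt | hlt <;>
          rw [Nat.descFactorial_eq_zero_iff_lt.mpr hlt] <;> push_cast <;> ring
      · rw [if_neg hz, mul_zero]

lemma pderiv_iter_add (t : Fin 6) (k : ℕ) (x y : P6) :
    (fun r : P6 => pderiv t r)^[k] (x + y)
      = (fun r : P6 => pderiv t r)^[k] x + (fun r : P6 => pderiv t r)^[k] y := by
  induction k generalizing x y with
  | zero => rfl
  | succ k ih => simp [Function.iterate_succ_apply, map_add, ih]

lemma polarPair_add_left (p p' q : P6) :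
    polarPair (p + p') q = polarPair p q + polarPair p' q := by
  unfold polarPair
  have h : ∀ r : P6, (∑ m ∈ r.support, MvPolynomial.C (r.coeff m) *
      ((fun r => pderiv 0 r)^[m 3] ((fun r => pderiv 1 r)^[m 4] ((fun r => pderiv 2 r)^[m 5] q))))
      = Finsupp.sum (AddMonoidAlgebra.coeff r) (fun m A => MvPolynomial.C A *
      ((fun r => pderiv 0 r)^[m 3] ((fun r => pderiv 1 r)^[m 4] ((fun r => pderiv 2 r)^[m 5] q)))) :=
    fun r => rfl
  rw [h, h, h, AddMonoidAlgebra.coeff_add, Finsupp.sum_add_index, map_add]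
  · intro m _
    simp
  · intro m _ A A'
    simp [add_mul]

lemma polarPair_sum_left {α : Type*} (s : Finset α) (f : α → P6) (q : P6) :
    polarPair (∑ x ∈ s, f x) q = ∑ x ∈ s, polarPair (f x) q := by
  classical
  induction s using Finset.induction_on with
  | empty => simp [polarPair]
  | insert _ _ hx ih =>
    rw [Finset.sum_insert hx, polarPair_add_left, ih, Finset.sum_insert hx]

lemma polarPair_add_right (p q q' : P6) :
    polarPair p (q + q') = polarPair p q + polarPair p q' := by
  unfold polarPair
  rw [← map_add, ← Finset.sum_add_distrib]
  congr 1
  refine Finset.sum_congr rfl fun m hm => ?_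
  rw [pderiv_iter_add, pderiv_iter_add, pderiv_iter_add, mul_add]

lemma polarPair_sum_right {α : Type*} (s : Finset α) (p : P6) (f : α → P6) :
    polarPair p (∑ x ∈ s, f x) = ∑ x ∈ s, polarPair p (f x) := by
  classical
  induction s using Finset.induction_on with
  | empty => simp [polarPair]
  | insert _ _ hx ih =>
    rw [Finset.sum_insert hx, polarPair_add_right, ih, Finset.sum_insert hx]

lemma D_iter_add (D : P6 → P6) (hD : ∀ x y, D (x + y) = D x + D y) (k : ℕ) (x y : P6) :
    D^[k] (x + y) = D^[k] x + D^[k] y := by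
  induction k generalizing x y with
  | zero => rfl
  | succ k ih => simp [Function.iterate_succ_apply, hD, ih]

lemma D1_add (x y : P6) : D1 (x + y) = D1 x + D1 y := by
  simp [D1, map_add, mul_add]; ring
lemma D2_add (x y : P6) : D2 (x + y) = D2 x + D2 y := by
  simp [D2, map_add, mul_add]; ring
lemma D3_add (x y : P6) : D3 (x + y) = D3 x + D3 y := by
  simp [D3, map_add, mul_add]; ring

lemma Jn_add_left (p p' q : P6) : Jn (p + p') q = Jn p q + Jn p' q := by
  unfold Jn
  have h : ∀ r : P6, (∑ m ∈ r.support, MvPolynomial.C (r.coeff m) *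
      (D1^[m 0] (D2^[m 1] (D3^[m 2] q))))
      = Finsupp.sum (AddMonoidAlgebra.coeff r) (fun m A => MvPolynomial.C A * (D1^[m 0] (D2^[m 1] (D3^[m 2] q)))) :=
    fun r => rfl
  rw [h, h, h, AddMonoidAlgebra.coeff_add, Finsupp.sum_add_index]
  · intro m _
    simp
  · intro m _ A A'
    simp [add_mul]

lemma Jn_sum_left {α : Type*} (s : Finset α) (f : α → P6) (q : P6) :
    Jn (∑ x ∈ s, f x) q = ∑ x ∈ s, Jn (f x) q := by
  classical
  induction s using Finset.induction_on with
  | empty => simp [Jn]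
  | insert _ _ hx ih =>
    rw [Finset.sum_insert hx, Jn_add_left, ih, Finset.sum_insert hx]

lemma Jn_add_right (p q q' : P6) : Jn p (q + q') = Jn p q + Jn p q' := by
  unfold Jn
  rw [← Finset.sum_add_distrib]
  refine Finset.sum_congr rfl fun m hm => ?_
  rw [D_iter_add D3 D3_add, D_iter_add D2 D2_add, D_iter_add D1 D1_add, mul_add]

lemma D_iter_zero (D : P6 → P6) (h : D 0 = 0) (k : ℕ) : D^[k] (0 : P6) = 0 := by
  induction k with
  | zero => rfl
  | succ k ih => simp [Function.iterate_succ_apply, h, ih]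

lemma Jn_sum_right {α : Type*} (s : Finset α) (p : P6) (f : α → P6) :
    Jn p (∑ x ∈ s, f x) = ∑ x ∈ s, Jn p (f x) := by
  classical
  induction s using Finset.induction_on with
  | empty =>
    simp [Jn, D_iter_zero D3 (by simp [D3]), D_iter_zero D2 (by simp [D2]),
      D_iter_zero D1 (by simp [D1])]
  | insert _ _ hx ih =>
    rw [Finset.sum_insert hx, Jn_add_right, ih, Finset.sum_insert hx]

def Tm (a b c a' b' c' a'' b'' c'' i j k : ℕ) : ℤ :=
  ((-1)^(a-i) * (-1)^(b-j) * (-1)^(c-k)) * a.choose i * b.choose j * c.choose k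
  * (a'.descFactorial ((c-k)+j)) * (b'.descFactorial (k+(a-i))) * (c'.descFactorial ((b-j)+i))
  * (if k+(b-j) = a'' ∧ (c-k)+i = b'' ∧ j+(a-i) = c''
      then ((a''.factorial * b''.factorial * c''.factorial : ℕ) : ℤ) else 0)

def S (a b c a' b' c' a'' b'' c'' : ℕ) : ℤ :=
  ∑ k ∈ Finset.range (c+1), ∑ j ∈ Finset.range (b+1), ∑ i ∈ Finset.range (a+1),
    Tm a b c a' b' c' a'' b'' c'' i j k

lemma tn_monomial (a b c a' b' c' a'' b'' c'' : ℕ) (A1 A2 A3 : ℤ) :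
    tn (monomial (mxyz a b c) A1) (monomial (mxyz a' b' c') A2)
        (monomial (mxyz a'' b'' c'') A3)
      = A1 * A2 * A3 * S a b c a' b' c' a'' b'' c'' := by
  unfold tn S
  rw [Jn_monomial, polarPair_sum_left, Finset.mul_sum]
  refine Finset.sum_congr rfl fun k hk => ?_
  rw [polarPair_sum_left, Finset.mul_sum]
  refine Finset.sum_congr rfl fun j hj => ?_
  rw [polarPair_sum_left, Finset.mul_sum]
  refine Finset.sum_congr rfl fun i hi => ?_
  rw [polarPair_monomial]
  have e3 : (eIdx (mxyz a' b' c') (k+(b-j)) ((c-k)+i) (j+(a-i)) ((c-k)+j) (k+(a-i))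
      ((b-j)+i)) 3 = k+(b-j) := by
    simp (config := { decide := true }) [eIdx, mxyz, Finsupp.tsub_apply, Finsupp.single_apply,
      Fin.ext_iff]
  have e4 : (eIdx (mxyz a' b' c') (k+(b-j)) ((c-k)+i) (j+(a-i)) ((c-k)+j) (k+(a-i))
      ((b-j)+i)) 4 = (c-k)+i := by
    simp (config := { decide := true }) [eIdx, mxyz, Finsupp.tsub_apply, Finsupp.single_apply,
      Fin.ext_iff]
  have e5 : (eIdx (mxyz a' b' c') (k+(b-j)) ((c-k)+i) (j+(a-i)) ((c-k)+j) (k+(a-i))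
      ((b-j)+i)) 5 = j+(a-i) := by
    simp (config := { decide := true }) [eIdx, mxyz, Finsupp.tsub_apply, Finsupp.single_apply,
      Fin.ext_iff]
  rw [e3, e4, e5]
  have r0 : (mxyz a' b' c') 0 = a' := (mxyz_apply a' b' c').1
  have r1 : (mxyz a' b' c') 1 = b' := (mxyz_apply a' b' c').2.1
  have r2 : (mxyz a' b' c') 2 = c' := (mxyz_apply a' b' c').2.2
  rw [r0, r1, r2]
  unfold Tm
  split_ifs <;> push_cast <;> ring

lemma Tm_zero {n a b c a' b' c' a'' b'' c'' i j k : ℕ} (h1 : a+b+c = n) (h2 : a'+b'+c' = n)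
    (hi : i ≤ a) (hj : j ≤ b) (hk : k ≤ c)
    (hno : ¬(k+(b-j) = a'' ∧ (c-k)+i = b'' ∧ j+(a-i) = c''
      ∧ (c-k)+j = a' ∧ k+(a-i) = b' ∧ (b-j)+i = c')) :
    Tm a b c a' b' c' a'' b'' c'' i j k = 0 := by
  unfold Tm
  by_cases hu : (k+(b-j) = a'' ∧ (c-k)+i = b'' ∧ j+(a-i) = c'')
  · have hlt : a' < (c-k)+j ∨ b' < k+(a-i) ∨ c' < (b-j)+i := by omega
    rcases hlt with hlt | hlt | hlt <;>
      rw [Nat.descFactorial_eq_zero_iff_lt.mpr hlt] <;> simp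
  · rw [if_neg hu, mul_zero]

lemma sign_helper (n s : ℕ) (hs : s ≤ n) : ((-1 : ℤ))^s = (-1)^n * (-1)^(n - s) := by
  rw [← pow_add]
  have h : n + (n - s) = 2*(n-s) + s := by omega
  rw [h, pow_add, pow_mul]
  simp

lemma chooseFac (x y n : ℕ) (h : x + y = n) :
    n.choose x * (x.factorial * y.factorial) = n.factorial := by
  subst h
  have := Nat.choose_mul_factorial_mul_factorial (Nat.le_add_right x y)
  rw [Nat.add_sub_cancel_left] at this
  rw [← this]
  ring

lemma Tm_filter_val {n a b c a' b' c' a'' b'' c'' i j k : ℕ}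
    (h1 : a+b+c = n) (hi : i ≤ a) (hj : j ≤ b) (hk : k ≤ c)
    (u1 : k+(b-j) = a'') (u2 : (c-k)+i = b'') (u3 : j+(a-i) = c'')
    (x1 : (c-k)+j = a') (x2 : k+(a-i) = b') (x3 : (b-j)+i = c') :
    Tm a b c a' b' c' a'' b'' c'' i j k
      = (-1:ℤ)^(n - (i+j+k)) * (a.choose i * b.choose j * c.choose k)
        * (a'.factorial * b'.factorial * c'.factorial)
        * (a''.factorial * b''.factorial * c''.factorial) := by
  unfold Tm
  rw [if_pos ⟨u1, u2, u3⟩, x1, x2, x3, Nat.descFactorial_self, Nat.descFactorial_self,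
    Nat.descFactorial_self]
  have hsgn : ((-1:ℤ))^(a-i) * (-1)^(b-j) * (-1)^(c-k) = (-1)^(n - (i+j+k)) := by
    rw [← pow_add, ← pow_add]
    congr 1
    omega
  rw [hsgn]
  push_cast
  ring

lemma chooseId {a b c a' b' c' i j k : ℕ} (hi : i ≤ a) (hj : j ≤ b) (hk : k ≤ c)
    (x1 : (c-k)+j = a') (x2 : k+(a-i) = b') (x3 : (b-j)+i = c') :
    a'.choose (c-k) * b'.choose (a-i) * c'.choose (b-j)
        * (a.factorial * b.factorial * c.factorial)
      = a.choose i * b.choose j * c.choose k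
        * (a'.factorial * b'.factorial * c'.factorial) := by
  have e1 := chooseFac (c-k) j a' x1
  have e2 := chooseFac (a-i) k b' (by omega)
  have e3 := chooseFac (b-j) i c' (by omega)
  have e4 := chooseFac i (a-i) a (by omega)
  have e5 := chooseFac j (b-j) b (by omega)
  have e6 := chooseFac k (c-k) c (by omega)
  apply Nat.eq_of_mul_eq_mul_right (show 0 < i.factorial * (a-i).factorial
    * (j.factorial * (b-j).factorial) * (k.factorial * (c-k).factorial) from by positivity)
  calc a'.choose (c-k) * b'.choose (a-i) * c'.choose (b-j)
        * (a.factorial * b.factorial * c.factorial)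
        * (i.factorial * (a-i).factorial * (j.factorial * (b-j).factorial)
          * (k.factorial * (c-k).factorial))
      = (a'.choose (c-k) * ((c-k).factorial * j.factorial))
        * (b'.choose (a-i) * ((a-i).factorial * k.factorial))
        * (c'.choose (b-j) * ((b-j).factorial * i.factorial))
        * (a.factorial * b.factorial * c.factorial) := by ring
    _ = a'.factorial * b'.factorial * c'.factorial
        * (a.factorial * b.factorial * c.factorial) := by rw [e1, e2, e3]
    _ = (a.choose i * (i.factorial * (a-i).factorial))
        * (b.choose j * (j.factorial * (b-j).factorial))
        * (c.choose k * (k.factorial * (c-k).factorial))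
        * (a'.factorial * b'.factorial * c'.factorial) := by rw [e4, e5, e6]; ring
    _ = a.choose i * b.choose j * c.choose k
        * (a'.factorial * b'.factorial * c'.factorial)
        * (i.factorial * (a-i).factorial * (j.factorial * (b-j).factorial)
          * (k.factorial * (c-k).factorial)) := by ring

lemma key12 {n a b c a' b' c' a'' b'' c'' : ℕ}
    (h1 : a+b+c = n) (h2 : a'+b'+c' = n) (h3 : a''+b''+c'' = n)
    {i j k : ℕ} (hi : i ≤ a) (hj : j ≤ b) (hk : k ≤ c) :
    Tm a b c a'' b'' c'' a' b' c' (a-i) (b-j) (c-k)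
      = (-1:ℤ)^n * Tm a b c a' b' c' a'' b'' c'' i j k := by
  by_cases hc6 : (k+(b-j) = a'' ∧ (c-k)+i = b'' ∧ j+(a-i) = c''
      ∧ (c-k)+j = a' ∧ k+(a-i) = b' ∧ (b-j)+i = c')
  · obtain ⟨u1, u2, u3, x1, x2, x3⟩ := hc6
    rw [Tm_filter_val h1 (by omega) (by omega) (by omega) (by omega) (by omega) (by omega)
      (by omega) (by omega) (by omega),
      Tm_filter_val h1 hi hj hk u1 u2 u3 x1 x2 x3]
    rw [Nat.choose_symm hi, Nat.choose_symm hj, Nat.choose_symm hk]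
    have he : n - ((a-i)+(b-j)+(c-k)) = i+j+k := by omega
    rw [he, sign_helper n (i+j+k) (by omega)]
    ring
  · rw [Tm_zero h1 h3 (by omega) (by omega) (by omega) (by omega),
      Tm_zero h1 h2 hi hj hk (by omega), mul_zero]

lemma key01 {n a b c a' b' c' a'' b'' c'' : ℕ}
    (h1 : a+b+c = n) (h2 : a'+b'+c' = n) (h3 : a''+b''+c'' = n)
    {i j k : ℕ} (hi : i ≤ a) (hj : j ≤ b) (hk : k ≤ c)
    (hc6 : k+(b-j) = a'' ∧ (c-k)+i = b'' ∧ j+(a-i) = c''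
      ∧ (c-k)+j = a' ∧ k+(a-i) = b' ∧ (b-j)+i = c') :
    Tm a' b' c' a b c a'' b'' c'' (c-k) (a-i) (b-j)
      = (-1:ℤ)^n * Tm a b c a' b' c' a'' b'' c'' i j k := by
  obtain ⟨u1, u2, u3, x1, x2, x3⟩ := hc6
  rw [Tm_filter_val h2 (by omega) (by omega) (by omega) (by omega) (by omega) (by omega)
    (by omega) (by omega) (by omega),
    Tm_filter_val h1 hi hj hk u1 u2 u3 x1 x2 x3]
  have hcid := chooseId hi hj hk x1 x2 x3
  have hzid : (a'.choose (c-k) * b'.choose (a-i) * c'.choose (b-j) : ℤ)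
      * ((a.factorial : ℤ) * b.factorial * c.factorial)
      = (a.choose i * b.choose j * c.choose k : ℤ)
      * ((a'.factorial : ℤ) * b'.factorial * c'.factorial) := by
    exact_mod_cast congrArg (Nat.cast : ℕ → ℤ) hcid
  have he : n - ((c-k)+(a-i)+(b-j)) = i+j+k := by omega
  rw [he, sign_helper n (i+j+k) (by omega)]
  linear_combination ((-1:ℤ)^n * (-1:ℤ)^(n-(i+j+k))
    * ((a''.factorial : ℤ) * b''.factorial * c''.factorial)) * hzid

lemma S_swap12 {n a b c a' b' c' a'' b'' c'' : ℕ}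
    (h1 : a+b+c = n) (h2 : a'+b'+c' = n) (h3 : a''+b''+c'' = n) :
    S a b c a'' b'' c'' a' b' c' = (-1:ℤ)^n * S a b c a' b' c' a'' b'' c'' := by
  unfold S
  rw [Finset.mul_sum, ← Finset.sum_range_reflect]
  refine Finset.sum_congr rfl fun k hk => ?_
  rw [Finset.mul_sum, ← Finset.sum_range_reflect]
  refine Finset.sum_congr rfl fun j hj => ?_
  rw [Finset.mul_sum, ← Finset.sum_range_reflect]
  refine Finset.sum_congr rfl fun i hi => ?_
  simp only [Nat.add_sub_cancel]
  have hi' : i ≤ a := Nat.lt_succ_iff.mp (Finset.mem_range.mp hi)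
  have hj' : j ≤ b := Nat.lt_succ_iff.mp (Finset.mem_range.mp hj)
  have hk' : k ≤ c := Nat.lt_succ_iff.mp (Finset.mem_range.mp hk)
  exact key12 h1 h2 h3 hi' hj' hk'

lemma S_prod (a b c a' b' c' a'' b'' c'' : ℕ) :
    S a b c a' b' c' a'' b'' c''
      = ∑ x ∈ (Finset.range (c+1) ×ˢ (Finset.range (b+1) ×ˢ Finset.range (a+1))),
          Tm a b c a' b' c' a'' b'' c'' x.2.2 x.2.1 x.1 := by
  rw [S, Finset.sum_product]
  refine Finset.sum_congr rfl fun k hk => ?_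
  rw [Finset.sum_product]

lemma S_filtered {n a b c a' b' c' a'' b'' c'' : ℕ}
    (h1 : a+b+c = n) (h2 : a'+b'+c' = n) :
    S a b c a' b' c' a'' b'' c''
      = ∑ x ∈ (Finset.range (c+1) ×ˢ (Finset.range (b+1) ×ˢ Finset.range (a+1))).filter
          (fun x => x.1+(b-x.2.1) = a'' ∧ (c-x.1)+x.2.2 = b'' ∧ x.2.1+(a-x.2.2) = c''
            ∧ (c-x.1)+x.2.1 = a' ∧ x.1+(a-x.2.2) = b' ∧ (b-x.2.1)+x.2.2 = c'),
          Tm a b c a' b' c' a'' b'' c'' x.2.2 x.2.1 x.1 := by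
  rw [S_prod]
  refine (Finset.sum_filter_of_ne ?_).symm
  intro x hx hne
  by_contra hno
  apply hne
  simp only [Finset.mem_product, Finset.mem_range] at hx
  exact Tm_zero h1 h2 (by omega) (by omega) (by omega) hno

lemma S_swap01 {n a b c a' b' c' a'' b'' c'' : ℕ}
    (h1 : a+b+c = n) (h2 : a'+b'+c' = n) (h3 : a''+b''+c'' = n) :
    S a' b' c' a b c a'' b'' c'' = (-1:ℤ)^n * S a b c a' b' c' a'' b'' c'' := by
  rw [S_filtered h2 h1, S_filtered h1 h2, Finset.mul_sum]
  refine (Finset.sum_nbij' (fun x => (b - x.2.1, (a - x.2.2, c - x.1)))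
    (fun y => (b' - y.2.1, (a' - y.2.2, c' - y.1))) ?_ ?_ ?_ ?_ ?_).symm
  · intro x hx
    simp only [Finset.mem_filter, Finset.mem_product, Finset.mem_range] at hx ⊢
    omega
  · intro y hy
    simp only [Finset.mem_filter, Finset.mem_product, Finset.mem_range] at hy ⊢
    omega
  · intro x hx
    simp only [Finset.mem_filter, Finset.mem_product, Finset.mem_range] at hx
    exact Prod.ext_iff.mpr ⟨by simp; omega, Prod.ext_iff.mpr ⟨by simp; omega, by simp; omega⟩⟩
  · intro y hy
    simp only [Finset.mem_filter, Finset.mem_product, Finset.mem_range] at hy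
    exact Prod.ext_iff.mpr ⟨by simp; omega, Prod.ext_iff.mpr ⟨by simp; omega, by simp; omega⟩⟩
  · intro x hx
    simp only [Finset.mem_filter, Finset.mem_product, Finset.mem_range] at hx
    obtain ⟨⟨hk, hj, hi⟩, hc6⟩ := hx
    have := key01 (n := n) h1 h2 h3 (i := x.2.2) (j := x.2.1) (k := x.1)
      (by omega) (by omega) (by omega) (by omega)
    simpa using this.symm

lemma support_struct {n : ℕ} {q : P6} (hq : q.IsHomogeneous n) (hx : OnlyXYZ q)
    {m : Fin 6 →₀ ℕ} (hm : m ∈ q.support) :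
    m = mxyz (m 0) (m 1) (m 2) ∧ (m 0) + (m 1) + (m 2) = n := by
  obtain ⟨h3, h4, h5⟩ := hx m hm
  constructor
  · ext l
    fin_cases l <;>
      simp (config := { decide := true }) [mxyz, Finsupp.single_apply, Fin.ext_iff, h3, h4, h5]
  · have hw := hq (MvPolynomial.mem_support_iff.mp hm)
    change Finsupp.weight (fun _ => 1) m = n at hw
    rw [← Finsupp.degree_eq_weight_one] at hw
    unfold Finsupp.degree at hw
    change ∑ i ∈ m.support, m i = n at hw
    have hsum : ∑ i ∈ m.support, m i = ∑ i ∈ (Finset.univ : Finset (Fin 6)), m i := by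
      refine Finset.sum_subset (Finset.subset_univ _) ?_
      intro x _ hxs
      exact Finsupp.notMem_support_iff.mp hxs
    rw [hsum, Fin.sum_univ_six, h3, h4, h5] at hw
    omega

lemma tn_expand (q1 q2 q3 : P6) :
    tn q1 q2 q3 = ∑ m1 ∈ q1.support, ∑ m2 ∈ q2.support, ∑ m3 ∈ q3.support,
      tn (monomial m1 (coeff m1 q1)) (monomial m2 (coeff m2 q2))
        (monomial m3 (coeff m3 q3)) := by
  conv_lhs => rw [q1.as_sum, q2.as_sum, q3.as_sum]
  unfold tn
  rw [Jn_sum_left, polarPair_sum_left]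
  refine Finset.sum_congr rfl fun m1 hm1 => ?_
  rw [Jn_sum_right, polarPair_sum_left]
  refine Finset.sum_congr rfl fun m2 hm2 => ?_
  rw [polarPair_sum_right]

lemma tn_01 {n : ℕ} (q1 q2 q3 : P6)
    (h1 : q1.IsHomogeneous n) (h2 : q2.IsHomogeneous n) (h3 : q3.IsHomogeneous n)
    (x1 : OnlyXYZ q1) (x2 : OnlyXYZ q2) (x3 : OnlyXYZ q3) :
    tn q2 q1 q3 = (-1:ℤ)^n * tn q1 q2 q3 := by
  rw [tn_expand q2 q1 q3, tn_expand q1 q2 q3, Finset.sum_comm, Finset.mul_sum]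
  refine Finset.sum_congr rfl fun m1 hm1 => ?_
  rw [Finset.mul_sum]
  refine Finset.sum_congr rfl fun m2 hm2 => ?_
  rw [Finset.mul_sum]
  refine Finset.sum_congr rfl fun m3 hm3 => ?_
  obtain ⟨a1, b1, c1, e1, d1⟩ : ∃ a b c, m1 = mxyz a b c ∧ a+b+c = n :=
    ⟨m1 0, m1 1, m1 2, support_struct h1 x1 hm1⟩
  obtain ⟨a2, b2, c2, e2, d2⟩ : ∃ a b c, m2 = mxyz a b c ∧ a+b+c = n :=
    ⟨m2 0, m2 1, m2 2, support_struct h2 x2 hm2⟩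
  obtain ⟨a3, b3, c3, e3, d3⟩ : ∃ a b c, m3 = mxyz a b c ∧ a+b+c = n :=
    ⟨m3 0, m3 1, m3 2, support_struct h3 x3 hm3⟩
  rw [e1, e2, e3, tn_monomial, tn_monomial, S_swap01 d1 d2 d3]
  ring

lemma tn_12 {n : ℕ} (q1 q2 q3 : P6)
    (h1 : q1.IsHomogeneous n) (h2 : q2.IsHomogeneous n) (h3 : q3.IsHomogeneous n)
    (x1 : OnlyXYZ q1) (x2 : OnlyXYZ q2) (x3 : OnlyXYZ q3) :
    tn q1 q3 q2 = (-1:ℤ)^n * tn q1 q2 q3 := by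
  rw [tn_expand q1 q3 q2, tn_expand q1 q2 q3, Finset.mul_sum]
  refine Finset.sum_congr rfl fun m1 hm1 => ?_
  rw [Finset.sum_comm, Finset.mul_sum]
  refine Finset.sum_congr rfl fun m2 hm2 => ?_
  rw [Finset.mul_sum]
  refine Finset.sum_congr rfl fun m3 hm3 => ?_
  obtain ⟨a1, b1, c1, e1, d1⟩ : ∃ a b c, m1 = mxyz a b c ∧ a+b+c = n :=
    ⟨m1 0, m1 1, m1 2, support_struct h1 x1 hm1⟩
  obtain ⟨a2, b2, c2, e2, d2⟩ : ∃ a b c, m2 = mxyz a b c ∧ a+b+c = n :=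
    ⟨m2 0, m2 1, m2 2, support_struct h2 x2 hm2⟩
  obtain ⟨a3, b3, c3, e3, d3⟩ : ∃ a b c, m3 = mxyz a b c ∧ a+b+c = n :=
    ⟨m3 0, m3 1, m3 2, support_struct h3 x3 hm3⟩
  rw [e1, e2, e3, tn_monomial, tn_monomial, S_swap12 d1 d2 d3]
  ring

end Aux

/-- For every permutation `σ ∈ 𝔖₃` and ternary forms `q1, q2, q3` of degree `n` in
`x, y, z` over `ℤ`, `t_n(q_{σ(1)}, q_{σ(2)}, q_{σ(3)}) = (sign σ)^n · t_n(q1, q2, q3)`. -/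
theorem statement6 (n : ℕ) (σ : Equiv.Perm (Fin 3)) (q : Fin 3 → Poly6 ℤ)
    (hhom : ∀ i, (q i).IsHomogeneous n) (hxyz : ∀ i, OnlyXYZ (q i)) :
    tn (q (σ 0)) (q (σ 1)) (q (σ 2)) =
      ((Equiv.Perm.sign σ : ℤ)) ^ n * tn (q 0) (q 1) (q 2) := by
  have pow2 : ((-1:ℤ))^n * (-1)^n = 1 := by
    rw [← pow_add, show n + n = 2*n from by omega, pow_mul]
    norm_num
  have key : ∀ x : Fin 3, x = 0 ∨ x = 1 ∨ x = 2 := by decide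
  have T01 := fun i j k => tn_01 (n := n) (q i) (q j) (q k)
    (hhom i) (hhom j) (hhom k) (hxyz i) (hxyz j) (hxyz k)
  have T12 := fun i j k => tn_12 (n := n) (q i) (q j) (q k)
    (hhom i) (hhom j) (hhom k) (hxyz i) (hxyz j) (hxyz k)
  have mkσ : ∀ (τ : Equiv.Perm (Fin 3)), σ 0 = τ 0 → σ 1 = τ 1 → σ 2 = τ 2 → σ = τ := by
    intro τ g0 g1 g2
    refine Equiv.ext fun x => ?_
    rcases key x with hx | hx | hx <;> subst hx <;> assumption
  rcases key (σ 0) with h0 | h0 | h0 <;> rcases key (σ 1) with h1 | h1 | h1 <;>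
      rcases key (σ 2) with h2 | h2 | h2 <;>
    try (first
      | exact absurd (σ.injective (h0.trans h1.symm)) (by decide)
      | exact absurd (σ.injective (h0.trans h2.symm)) (by decide)
      | exact absurd (σ.injective (h1.trans h2.symm)) (by decide))
  · -- (0,1,2) identity
    have hσ : σ = 1 := mkσ 1 (by rw [h0]; rfl) (by rw [h1]; rfl) (by rw [h2]; rfl)
    rw [h0, h1, h2, hσ]
    simp
  · -- (0,2,1) : swap 1 2
    have hσ : σ = Equiv.swap 1 2 :=
      mkσ _ (by rw [h0]; decide) (by rw [h1]; decide) (by rw [h2]; decide)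
    rw [h0, h1, h2, hσ]
    have hs : ((Equiv.Perm.sign (Equiv.swap (1:Fin 3) 2) : ℤˣ) : ℤ) = -1 := by decide
    rw [hs]
    simpa using T12 0 1 2
  · -- (1,0,2) : swap 0 1
    have hσ : σ = Equiv.swap 0 1 :=
      mkσ _ (by rw [h0]; decide) (by rw [h1]; decide) (by rw [h2]; decide)
    rw [h0, h1, h2, hσ]
    have hs : ((Equiv.Perm.sign (Equiv.swap (0:Fin 3) 1) : ℤˣ) : ℤ) = -1 := by decide
    rw [hs]
    simpa using T01 0 1 2
  · -- (1,2,0) : 3-cycle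
    have hσ : σ = finRotate 3 :=
      mkσ _ (by rw [h0]; decide) (by rw [h1]; decide) (by rw [h2]; decide)
    rw [h0, h1, h2, hσ]
    have hs : ((Equiv.Perm.sign (finRotate 3) : ℤˣ) : ℤ) = 1 := by decide
    rw [hs, one_pow, one_mul]
    calc tn (q 1) (q 2) (q 0) = (-1:ℤ)^n * tn (q 1) (q 0) (q 2) := T12 1 0 2
      _ = (-1:ℤ)^n * ((-1:ℤ)^n * tn (q 0) (q 1) (q 2)) := by rw [T01 0 1 2]
      _ = tn (q 0) (q 1) (q 2) := by rw [← mul_assoc, pow2, one_mul]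
  · -- (2,0,1) : inverse 3-cycle
    have hσ : σ = (finRotate 3)⁻¹ :=
      mkσ _ (by rw [h0]; decide) (by rw [h1]; decide) (by rw [h2]; decide)
    rw [h0, h1, h2, hσ]
    have hs : ((Equiv.Perm.sign (finRotate 3)⁻¹ : ℤˣ) : ℤ) = 1 := by decide
    rw [hs, one_pow, one_mul]
    calc tn (q 2) (q 0) (q 1) = (-1:ℤ)^n * tn (q 0) (q 2) (q 1) := T01 0 2 1
      _ = (-1:ℤ)^n * ((-1:ℤ)^n * tn (q 0) (q 1) (q 2)) := by rw [T12 0 1 2]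
      _ = tn (q 0) (q 1) (q 2) := by rw [← mul_assoc, pow2, one_mul]
  · -- (2,1,0) : swap 0 2
    have hσ : σ = Equiv.swap 0 2 :=
      mkσ _ (by rw [h0]; decide) (by rw [h1]; decide) (by rw [h2]; decide)
    rw [h0, h1, h2, hσ]
    have hs : ((Equiv.Perm.sign (Equiv.swap (0:Fin 3) 2) : ℤˣ) : ℤ) = -1 := by decide
    rw [hs]
    calc tn (q 2) (q 1) (q 0) = (-1:ℤ)^n * tn (q 1) (q 2) (q 0) := T01 1 2 0
      _ = (-1:ℤ)^n * ((-1:ℤ)^n * tn (q 1) (q 0) (q 2)) := by rw [T12 1 0 2]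
      _ = tn (q 1) (q 0) (q 2) := by rw [← mul_assoc, pow2, one_mul]
      _ = (-1:ℤ)^n * tn (q 0) (q 1) (q 2) := T01 0 1 2
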